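/- Let n ≥ 2 be an integer and let p > n + 1 be a prime. Let F_n(x) = Σ x^{i_1}/(i_1 ⋯ i_n) and F_{n-1}(x) = Σ x^{i_1}/(i_1 ⋯ i_{n-1}) be polynomials over ℤ/pℤ, the sums ranging over strictly increasing tuples of integers strictly between 0 and p, and let C = Σ 1/(i_2 ⋯ i_n) ∈ ℤ/pℤ, the sum over all (n-1)-tuples of integers 0 < i_2 < ⋯ < i_n < p. Then x(x - 1) · F_n'(x) = F_{n-1}(x) - x·C as polynomials over ℤ/pℤ, where F_n' denotes the formal derivative of F_n. -/

import Mathlib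

open Polynomial

/-- The polynomial `F_n(x) = ∑ x^{i₁}/(i₁⋯iₙ)` over `ℤ/pℤ`, the sum ranging over all
strictly increasing `n`-tuples of integers `0 < i₁ < ⋯ < iₙ < p`. -/
noncomputable def zhaoSunF (n p : ℕ) (hn : 0 < n) : Polynomial (ZMod p) :=
  ∑ f ∈ (Fintype.piFinset fun _ : Fin n => Finset.Ioo 0 p).filter
      (fun f => ∀ i j : Fin n, i < j → f i < f j),
    Polynomial.C (∏ k : Fin n, ((f k : ZMod p))⁻¹) * Polynomial.X ^ (f ⟨0, hn⟩)

/-- Let `n ≥ 2` and let `p > n + 1` be a prime. With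
`C = ∑ 1/(i₂⋯iₙ)` over all `(n-1)`-tuples `0 < i₂ < ⋯ < iₙ < p`, we have
`x(x-1)·Fₙ'(x) = F_{n-1}(x) - x·C` as polynomials over `ℤ/pℤ`. -/
private lemma zhaoSun_tele {R : Type*} [CommRing R] : ∀ b : ℕ, 1 ≤ b →
    ∑ a ∈ Finset.Ioo 0 b, ((X : R[X]) ^ (a + 1) - X ^ a) = X ^ b - X := by
  intro b hb
  induction b with
  | zero => omega
  | succ b ih =>
    rcases Nat.lt_or_ge b 1 with h | h
    · obtain rfl : b = 0 := by omega
      rw [show Finset.Ioo 0 1 = ∅ from rfl]; simp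
    · rw [← Finset.Ico_add_one_left_eq_Ioo, zero_add] at ih ⊢
      rw [Finset.sum_Ico_succ_top (by omega : 1 ≤ b), ih h]
      ring

private lemma zhaoSun_key (m p : ℕ) (hp : p.Prime) :
    (Polynomial.X : Polynomial (ZMod p)) * (Polynomial.X - 1) *
        Polynomial.derivative (zhaoSunF (m + 2) p (by omega)) =
      zhaoSunF (m + 1) p (by omega) -
        Polynomial.X * Polynomial.C
          (∑ f ∈ (Fintype.piFinset fun _ : Fin (m + 1) => Finset.Ioo 0 p).filter
              (fun f => ∀ i j : Fin (m + 1), i < j → f i < f j),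
            ∏ k : Fin (m + 1), ((f k : ZMod p))⁻¹) := by
  haveI := Fact.mk hp
  set S2 := (Fintype.piFinset fun _ : Fin (m + 2) => Finset.Ioo 0 p).filter
      (fun f => ∀ i j : Fin (m + 2), i < j → f i < f j) with hS2
  set S1 := (Fintype.piFinset fun _ : Fin (m + 1) => Finset.Ioo 0 p).filter
      (fun f => ∀ i j : Fin (m + 1), i < j → f i < f j) with hS1
  have hmem2 : ∀ f ∈ S2, (∀ k, 0 < f k ∧ f k < p) ∧
      (∀ i j : Fin (m + 2), i < j → f i < f j) := by
    intro f hf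
    rw [hS2, Finset.mem_filter, Fintype.mem_piFinset] at hf
    exact ⟨fun k => Finset.mem_Ioo.mp (hf.1 k), hf.2⟩
  have hmem1 : ∀ g ∈ S1, (∀ k, 0 < g k ∧ g k < p) ∧
      (∀ i j : Fin (m + 1), i < j → g i < g j) := by
    intro g hg
    rw [hS1, Finset.mem_filter, Fintype.mem_piFinset] at hg
    exact ⟨fun k => Finset.mem_Ioo.mp (hg.1 k), hg.2⟩
  have hne : ∀ a : ℕ, 0 < a → a < p → ((a : ZMod p)) ≠ 0 := by
    intro a h0 h1 h
    rw [ZMod.natCast_eq_zero_iff] at h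
    exact absurd (Nat.le_of_dvd h0 h) (by omega)
  have h1 : Polynomial.X * (Polynomial.X - 1) *
      Polynomial.derivative (zhaoSunF (m + 2) p (by omega)) =
      ∑ f ∈ S2, Polynomial.C (∏ k : Fin (m + 1), ((f k.succ : ZMod p))⁻¹) *
        ((X : Polynomial (ZMod p)) ^ (f 0 + 1) - X ^ (f 0)) := by
    rw [zhaoSunF, derivative_sum, Finset.mul_sum]
    refine Finset.sum_congr rfl fun f hf => ?_
    obtain ⟨hrange, _⟩ := hmem2 f hf
    have h0 : (0 : Fin (m + 2)) = ⟨0, by omega⟩ := rfl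
    rw [derivative_C_mul_X_pow, ← h0]
    have hprod : (∏ k : Fin (m + 2), ((f k : ZMod p))⁻¹) * ((f 0 : ℕ) : ZMod p) =
        ∏ k : Fin (m + 1), ((f k.succ : ZMod p))⁻¹ := by
      rw [Fin.prod_univ_succ, mul_comm (((f 0 : ℕ) : ZMod p))⁻¹, mul_assoc,
        inv_mul_cancel₀ (hne _ (hrange 0).1 (hrange 0).2), mul_one]
    rw [hprod]
    obtain ⟨d, hd⟩ : ∃ d, f 0 = d + 1 := ⟨f 0 - 1, by have := (hrange 0).1; omega⟩
    rw [hd]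
    simp only [Nat.add_sub_cancel]
    ring
  rw [h1]
  have h2 : ∑ f ∈ S2, Polynomial.C (∏ k : Fin (m + 1), ((f k.succ : ZMod p))⁻¹) *
        ((X : Polynomial (ZMod p)) ^ (f 0 + 1) - X ^ (f 0)) =
      ∑ g ∈ S1, ∑ a ∈ Finset.Ioo 0 (g 0),
        Polynomial.C (∏ k : Fin (m + 1), ((g k : ZMod p))⁻¹) *
          ((X : Polynomial (ZMod p)) ^ (a + 1) - X ^ a) := by
    rw [Finset.sum_sigma']
    refine Finset.sum_nbij' (i := fun f => ⟨fun k => f k.succ, f 0⟩)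
      (j := fun x => Fin.cons x.2 x.1) ?_ ?_ ?_ ?_ ?_
    · intro f hf
      obtain ⟨hrange, hmono⟩ := hmem2 f hf
      rw [Finset.mem_sigma]
      constructor
      · rw [hS1, Finset.mem_filter, Fintype.mem_piFinset]
        refine ⟨fun k => Finset.mem_Ioo.mpr ⟨(hrange k.succ).1, (hrange k.succ).2⟩, ?_⟩
        intro i j hij
        exact hmono i.succ j.succ (by simpa using hij)
      · exact Finset.mem_Ioo.mpr ⟨(hrange 0).1, hmono 0 (Fin.succ 0) (by simp)⟩
    · rintro ⟨g, a⟩ hx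
      rw [Finset.mem_sigma] at hx
      obtain ⟨hg, ha⟩ := hx
      obtain ⟨hrange, hmono⟩ := hmem1 g hg
      rw [Finset.mem_Ioo] at ha
      rw [hS2, Finset.mem_filter, Fintype.mem_piFinset]
      constructor
      · intro k
        refine Fin.cases ?_ ?_ k
        · simpa using Finset.mem_Ioo.mpr ⟨ha.1, lt_trans ha.2 (hrange 0).2⟩
        · intro i
          simpa using Finset.mem_Ioo.mpr ⟨(hrange i).1, (hrange i).2⟩
      · have hsm : StrictMono (Fin.cons a g : Fin (m + 2) → ℕ) := by
          rw [Fin.strictMono_iff_lt_succ]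
          intro i
          refine Fin.cases ?_ (fun s => ?_) i
          · simpa using ha.2
          · rw [← Fin.succ_castSucc, Fin.cons_succ, Fin.cons_succ]
            exact hmono _ _ (Fin.castSucc_lt_succ (i := s))
        exact fun i j hij => hsm hij
    · intro f hf
      exact Fin.cons_self_tail f
    · rintro ⟨g, a⟩ hx
      simp only [Fin.cons_succ, Fin.cons_zero]
    · intro f hf
      rfl
  rw [h2]
  have h3 : ∑ g ∈ S1, ∑ a ∈ Finset.Ioo 0 (g 0),
        Polynomial.C (∏ k : Fin (m + 1), ((g k : ZMod p))⁻¹) *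
          ((X : Polynomial (ZMod p)) ^ (a + 1) - X ^ a) =
      ∑ g ∈ S1, (Polynomial.C (∏ k : Fin (m + 1), ((g k : ZMod p))⁻¹) *
          (X : Polynomial (ZMod p)) ^ (g 0) -
        Polynomial.X * Polynomial.C (∏ k : Fin (m + 1), ((g k : ZMod p))⁻¹)) := by
    refine Finset.sum_congr rfl fun g hg => ?_
    rw [← Finset.mul_sum, zhaoSun_tele (g 0) ((hmem1 g hg).1 0).1]
    ring
  rw [h3, Finset.sum_sub_distrib]
  congr 1
  rw [map_sum, Finset.mul_sum]

theorem zhaoSunF_derivative (n p : ℕ) (hn : 2 ≤ n) (hp : p.Prime) (hnp : n + 1 < p) :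
    Polynomial.X * (Polynomial.X - 1) *
        Polynomial.derivative (zhaoSunF n p (by omega)) =
      zhaoSunF (n - 1) p (by omega) -
        Polynomial.X * Polynomial.C
          (∑ f ∈ (Fintype.piFinset fun _ : Fin (n - 1) => Finset.Ioo 0 p).filter
              (fun f => ∀ i j : Fin (n - 1), i < j → f i < f j),
            ∏ k : Fin (n - 1), ((f k : ZMod p))⁻¹) := by
  obtain ⟨m, rfl⟩ : ∃ m, n = m + 2 := ⟨n - 2, by omega⟩
  exact zhaoSun_key m p hp
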